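/- Let k be a commutative ring, G a finite group, H ≤ G a subgroup, V a k-linear representation of H, and n ∈ ℕ. Regard H ≀ Σ_n as a subgroup of G ≀ Σ_n via the coordinatewise inclusion of H in G on the base. Then there is an isomorphism of k-linear (G ≀ Σ_n)-representations Ind_{H ≀ Σ_n}^{G ≀ Σ_n} (V^{⊗ n}) ≅ (Ind_H^G V)^{⊗ n}, where H ≀ Σ_n acts on V^{⊗ n} and G ≀ Σ_n acts on (Ind_H^G V)^{⊗ n} by the wreath tensor-power actions. (This is the paper's Lemma asserting that induction commutes with the k-th power operation, specialized to a point.) -/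

import Mathlib

open Equiv TensorProduct PiTensorProduct DirectSum

/-- The action of `Perm I` on `I → G` by `(σ • g) i = g (σ⁻¹ i)`. -/
def permAut (G : Type*) [Group G] (I : Type*) : Equiv.Perm I →* MulAut (I → G) where
  toFun σ :=
    { toFun := fun g => g ∘ σ.symm
      invFun := fun g => g ∘ σ
      left_inv := fun g => by funext i; simp
      right_inv := fun g => by funext i; simp
      map_mul' := fun g h => rfl }
  map_one' := by ext g i; rfl
  map_mul' := fun σ τ => by ext g i; rfl

/-- The wreath product `G ≀ Σ(I)`. -/
abbrev Wreath (G : Type*) [Group G] (I : Type*) :=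
  (I → G) ⋊[permAut G I] Equiv.Perm I

/-- The wreath tensor-power representation of `G ≀ Σ(I)` on `⨂ (i : I), V`:
the base `I → G` acts factorwise and `Perm I` permutes the tensor factors. -/
noncomputable def wreathRep (R : Type*) [CommRing R] {G : Type*} [Group G] (I : Type*)
    {V : Type*} [AddCommGroup V] [Module R V] (ρ : Representation R G V) :
    Representation R (Wreath G I) (⨂[R] _i : I, V) where
  toFun w :=
    (PiTensorProduct.map fun i => ρ (w.left i)).comp
      (PiTensorProduct.reindex R (fun _ : I => V) w.right).toLinearMap
  map_one' := by
    ext v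
    simp [Equiv.Perm.one_def]
  map_mul' := fun w₁ w₂ => by
    ext v
    simp [permAut, SemidirectProduct.mul_left, SemidirectProduct.mul_right,
      Equiv.Perm.mul_apply, Equiv.Perm.inv_def, Equiv.Perm.mul_def]

section Ind

variable (k : Type*) [CommRing k] {H G : Type*} [Group H] [Group G] (f : H →* G)
  (V : Type*) [AddCommGroup V] [Module k V] (ρ : Representation k H V)

/-- The submodule of relations defining the balanced tensor product
`MonoidAlgebra k G ⊗[MonoidAlgebra k H] V`. -/
noncomputable def indRel : Submodule k (MonoidAlgebra k G ⊗[k] V) :=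
  Submodule.span k {x | ∃ (a : MonoidAlgebra k G) (h : H) (v : V),
    x = (a * MonoidAlgebra.of k G (f h)) ⊗ₜ[k] v - a ⊗ₜ[k] (ρ h v)}

/-- The induced representation `Ind_H^G V = MonoidAlgebra k G ⊗_{MonoidAlgebra k H} V`,
realized as the quotient of `MonoidAlgebra k G ⊗[k] V` by the balancing relations. -/
abbrev Ind : Type _ := (MonoidAlgebra k G ⊗[k] V) ⧸ indRel k f V ρ

theorem indRel_le_comap (g : G) :
    indRel k f V ρ ≤ (indRel k f V ρ).comap
      (LinearMap.rTensor V (LinearMap.mulLeft k (MonoidAlgebra.of k G g))) := by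
  rw [indRel, Submodule.span_le]
  rintro x ⟨a, h, v, rfl⟩
  simp only [SetLike.mem_coe, Submodule.mem_comap, map_sub, LinearMap.rTensor_tmul,
    LinearMap.mulLeft_apply]
  rw [← mul_assoc]
  exact Submodule.subset_span ⟨MonoidAlgebra.of k G g * a, h, v, rfl⟩

/-- The `G`-action on `Ind_H^G V` by left multiplication on the first factor. -/
noncomputable def indRep : Representation k G (Ind k f V ρ) where
  toFun g := Submodule.mapQ _ _
      (LinearMap.rTensor V (LinearMap.mulLeft k (MonoidAlgebra.of k G g)))
      (indRel_le_comap k f V ρ g)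
  map_one' := by
    apply LinearMap.ext
    intro x
    induction x using Submodule.Quotient.induction_on with
    | _ y =>
      simp [Submodule.mapQ_apply, ← MonoidAlgebra.one_def, LinearMap.mulLeft_one]
  map_mul' := fun g₁ g₂ => by
    apply LinearMap.ext
    intro x
    induction x using Submodule.Quotient.induction_on with
    | _ y =>
      simp only [Submodule.mapQ_apply, _root_.map_mul, LinearMap.mulLeft_mul,
        LinearMap.rTensor_comp, LinearMap.comp_apply, Module.End.mul_apply]

end Ind

/-- The coordinatewise inclusion `H ≀ Σ(I) → G ≀ Σ(I)` induced by `f : H →* G`. -/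
def wreathMap {H G : Type*} [Group H] [Group G] (f : H →* G) (I : Type*) :
    Wreath H I →* Wreath G I where
  toFun w := ⟨⇑f ∘ w.left, w.right⟩
  map_one' := by
    ext i
    · simp
    · simp
  map_mul' := fun a b => by
    ext i
    · simp [permAut, -SemidirectProduct.mk_eq_inl_mul_inr]
      rfl
    · simp

noncomputable section Aux7

namespace Aux7

set_option synthInstance.maxHeartbeats 1000000
set_option maxHeartbeats 1600000

attribute [local instance] Classical.decEq

section Model

variable {k : Type*} [CommRing k] {H G : Type*} [Group H] [Group G] (f : H →* G)
  {V : Type*} [AddCommGroup V] [Module k V] (ρ : Representation k H V)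
  {C : Type*} [DecidableEq C] (q : G → C) (s : C → G) (θ : G → H)

/-- The forward map of the model of the induced representation. -/
def fwdLin : MonoidAlgebra k G ⊗[k] V →ₗ[k] Π₀ _c : C, V :=
  TensorProduct.lift (((Finsupp.lift (V →ₗ[k] Π₀ _c : C, V) k G)
    fun g => (DFinsupp.lsingle (q g)) ∘ₗ (ρ (θ g) : V →ₗ[k] V)) ∘ₗ
      (MonoidAlgebra.coeffLinearEquiv k).toLinearMap)

lemma fwdLin_of (g : G) (v : V) :
    fwdLin ρ q θ (MonoidAlgebra.of k G g ⊗ₜ[k] v) = DFinsupp.single (q g) (ρ (θ g) v) := by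
  simp only [fwdLin, TensorProduct.lift.tmul, MonoidAlgebra.of_apply]
  erw [Finsupp.lift_apply, Finsupp.sum_single_index (by simp), one_smul]
  rfl

lemma indRel_le_ker (hq : ∀ (g : G) (h : H), q (g * f h) = q g)
    (hθm : ∀ (g : G) (h : H), θ (g * f h) = θ g * h) :
    indRel k f V ρ ≤ LinearMap.ker (fwdLin ρ q θ) := by
  rw [indRel, Submodule.span_le]
  rintro x ⟨a, h, v, rfl⟩
  simp only [SetLike.mem_coe, LinearMap.mem_ker, map_sub, sub_eq_zero]
  induction a using MonoidAlgebra.induction_on with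
  | of g =>
    rw [← _root_.map_mul, fwdLin_of, fwdLin_of, hq, hθm, _root_.map_mul]
    rfl
  | add a b ha hb =>
    rw [add_mul, TensorProduct.add_tmul, TensorProduct.add_tmul, map_add, map_add, ha, hb]
  | smul r a ha =>
    rw [smul_mul_assoc, ← TensorProduct.smul_tmul', ← TensorProduct.smul_tmul', map_smul,
      map_smul, ha]

variable (hq : ∀ (g : G) (h : H), q (g * f h) = q g)
  (hθm : ∀ (g : G) (h : H), θ (g * f h) = θ g * h)
  (hs : ∀ c, q (s c) = c) (hθ1 : ∀ c, θ (s c) = 1)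
  (hθ : ∀ g, f (θ g) = (s (q g))⁻¹ * g)

/-- The model of the induced representation as a direct sum over the coset space. -/
def indModel : Ind k f V ρ ≃ₗ[k] Π₀ _c : C, V :=
  LinearEquiv.ofLinear
    ((indRel k f V ρ).liftQ (fwdLin ρ q θ) (indRel_le_ker f ρ q θ hq hθm))
    (DFinsupp.lsum k fun c => (indRel k f V ρ).mkQ ∘ₗ
      TensorProduct.mk k (MonoidAlgebra k G) V (MonoidAlgebra.of k G (s c)))
    (by
      apply DFinsupp.lhom_ext'
      intro c
      apply LinearMap.ext
      intro v
      simp only [LinearMap.coe_comp, Function.comp_apply, DFinsupp.lsingle_apply,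
        DFinsupp.lsum_single, Submodule.mkQ_apply, TensorProduct.mk_apply,
        Submodule.liftQ_apply, LinearMap.id_coe, id_eq]
      rw [fwdLin_of, hs, hθ1, _root_.map_one]
      rfl)
    (by
      apply Submodule.linearMap_qext
      rw [LinearMap.comp_assoc, Submodule.liftQ_mkQ, LinearMap.id_comp]
      apply TensorProduct.ext'
      intro a v
      induction a using MonoidAlgebra.induction_on with
      | of g =>
        simp only [LinearMap.comp_apply]
        rw [fwdLin_of, DFinsupp.lsum_single]
        simp only [LinearMap.comp_apply, TensorProduct.mk_apply, Submodule.mkQ_apply]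
        rw [Submodule.Quotient.eq]
        have hmem : MonoidAlgebra.of k G g ⊗ₜ[k] v -
            MonoidAlgebra.of k G (s (q g)) ⊗ₜ[k] (ρ (θ g) v) ∈ indRel k f V ρ := by
          have := Submodule.subset_span (R := k)
            (s := {x | ∃ (a : MonoidAlgebra k G) (h : H) (v : V),
              x = (a * MonoidAlgebra.of k G (f h)) ⊗ₜ[k] v - a ⊗ₜ[k] (ρ h v)})
            ⟨MonoidAlgebra.of k G (s (q g)), θ g, v, rfl⟩
          rw [← _root_.map_mul, hθ, mul_inv_cancel_left] at this
          exact this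
        simpa using (indRel k f V ρ).neg_mem hmem
      | add a b ha hb =>
        rw [TensorProduct.add_tmul, map_add, map_add, ha, hb]
      | smul r a ha =>
        rw [← TensorProduct.smul_tmul', map_smul, map_smul, ha])

lemma indModel_mk_of (g : G) (v : V) :
    indModel f ρ q s θ hq hθm hs hθ1 hθ
      (Submodule.Quotient.mk (MonoidAlgebra.of k G g ⊗ₜ[k] v)) =
      DFinsupp.single (q g) (ρ (θ g) v) := by
  rw [indModel, LinearEquiv.ofLinear_apply, Submodule.liftQ_apply, fwdLin_of]

lemma indModel_symm_single (c : C) (v : V) :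
    (indModel f ρ q s θ hq hθm hs hθ1 hθ).symm (DFinsupp.single c v) =
      Submodule.Quotient.mk (MonoidAlgebra.of k G (s c) ⊗ₜ[k] v) := by
  rw [indModel, LinearEquiv.ofLinear_symm_apply, DFinsupp.lsum_single]
  rfl

end Model

section PiT

variable (k : Type*) [CommRing k] {C : Type*} [DecidableEq C] {V : Type*} [AddCommGroup V]
  [Module k V] (n : ℕ)

/-- Finitely supported functions distribute over finite tensor products. -/
def piTensorDFinsupp :
    (⨂[k] _i : Fin n, (Π₀ _c : C, V)) ≃ₗ[k] Π₀ _p : Fin n → C, ⨂[k] _i : Fin n, V :=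
  LinearEquiv.ofLinear
    (PiTensorProduct.lift (MultilinearMap.dfinsuppFamily (κ := fun _ : Fin n => C)
      (M := fun _ _ => V) (N := fun _ => ⨂[k] _i : Fin n, V)
      fun _p => PiTensorProduct.tprod k))
    (DFinsupp.lsum k fun p => PiTensorProduct.map fun i =>
      DFinsupp.lsingle (R := k) (M := fun _ : C => V) (p i))
    (by
      apply DFinsupp.lhom_ext'
      intro p
      apply PiTensorProduct.ext
      apply MultilinearMap.ext
      intro m
      simp only [LinearMap.compMultilinearMap_apply, LinearMap.comp_apply,
        DFinsupp.lsingle_apply, DFinsupp.lsum_single, PiTensorProduct.map_tprod,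
        PiTensorProduct.lift.tprod, LinearMap.id_coe, id_eq]
      exact MultilinearMap.dfinsuppFamily_single (R := k) (κ := fun _ : Fin n => C)
        (M := fun _ _ => V) (N := fun _ => ⨂[k] _i : Fin n, V)
        (fun _p => PiTensorProduct.tprod k) p m)
    (by
      apply PiTensorProduct.ext
      apply MultilinearMap.dfinsupp_ext
      intro p
      apply MultilinearMap.ext
      intro m
      simp only [MultilinearMap.compLinearMap_apply, LinearMap.compMultilinearMap_apply,
        DFinsupp.lsingle_apply, LinearMap.comp_apply, PiTensorProduct.lift.tprod,
        LinearMap.id_coe, id_eq]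
      have h := MultilinearMap.dfinsuppFamily_single (R := k) (κ := fun _ : Fin n => C)
        (M := fun _ _ => V) (N := fun _ => ⨂[k] _i : Fin n, V)
        (fun _p => PiTensorProduct.tprod k) p m
      rw [h, DFinsupp.lsum_single, PiTensorProduct.map_tprod]
      simp [DFinsupp.lsingle_apply])

lemma piTensorDFinsupp_tprod_single (p : Fin n → C) (m : Fin n → V) :
    piTensorDFinsupp k (C := C) (V := V) n
      (PiTensorProduct.tprod k fun i => DFinsupp.single (p i) (m i)) =
      DFinsupp.single p (PiTensorProduct.tprod k m) := by
  rw [piTensorDFinsupp, LinearEquiv.ofLinear_apply, PiTensorProduct.lift.tprod]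
  exact MultilinearMap.dfinsuppFamily_single (R := k) (κ := fun _ : Fin n => C)
    (M := fun _ _ => V) (N := fun _ => ⨂[k] _i : Fin n, V)
    (fun _p => PiTensorProduct.tprod k) p m

end PiT

section WreathData

variable {G : Type*} [Group G] (S : Subgroup G)

/-- For `g : G`, the canonical element of `S` relating `g` to the chosen coset
representative. -/
def thetaS (g : G) : S :=
  ⟨(QuotientGroup.mk g : G ⧸ S).out⁻¹ * g,
    QuotientGroup.eq.mp (QuotientGroup.out_eq' (QuotientGroup.mk g))⟩

lemma thetaS_mul (g : G) (h : S) : thetaS S (g * (h : G)) = thetaS S g * h := by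
  apply Subtype.ext
  show (QuotientGroup.mk (g * (h : G)) : G ⧸ S).out⁻¹ * (g * (h : G)) =
    ((QuotientGroup.mk g : G ⧸ S).out⁻¹ * g) * (h : G)
  rw [QuotientGroup.mk_mul_of_mem g h.2, mul_assoc]

lemma thetaS_out (c : G ⧸ S) : thetaS S c.out = 1 := by
  apply Subtype.ext
  simp only [thetaS, QuotientGroup.out_eq']
  exact inv_mul_cancel _

lemma subtype_thetaS (g : G) :
    S.subtype (thetaS S g) = ((QuotientGroup.mk g : G ⧸ S).out)⁻¹ * g := rfl

variable (n : ℕ)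

/-- The coset-class map for the wreath product. -/
def qW (w : Wreath G (Fin n)) : Fin n → G ⧸ S := fun i => QuotientGroup.mk (w.left i)

/-- The section for the wreath product. -/
def sW (c : Fin n → G ⧸ S) : Wreath G (Fin n) := ⟨fun i => (c i).out, 1⟩

/-- The `H`-part for the wreath product. -/
def thetaW (w : Wreath G (Fin n)) : Wreath S (Fin n) :=
  ⟨fun i => thetaS S (w.left i), w.right⟩

lemma qW_mul (w : Wreath G (Fin n)) (h : Wreath S (Fin n)) :
    qW S n (w * wreathMap S.subtype (Fin n) h) = qW S n w := by
  funext i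
  show QuotientGroup.mk (w.left i * (S.subtype (h.left (w.right.symm i)))) = _
  exact QuotientGroup.mk_mul_of_mem _ (h.left (w.right.symm i)).2

lemma thetaW_mul (w : Wreath G (Fin n)) (h : Wreath S (Fin n)) :
    thetaW S n (w * wreathMap S.subtype (Fin n) h) = thetaW S n w * h := by
  ext i
  · show (thetaS S (w.left i * ((h.left (w.right.symm i) : S) : G)) : G) = _
    rw [thetaS_mul]
    rfl
  · rfl

lemma qW_sW (c : Fin n → G ⧸ S) : qW S n (sW S n c) = c := by
  funext i
  exact QuotientGroup.out_eq' (c i)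

lemma thetaW_sW (c : Fin n → G ⧸ S) : thetaW S n (sW S n c) = 1 := by
  ext i
  · show (thetaS S ((c i).out) : G) = _
    rw [thetaS_out]
    rfl
  · rfl

lemma sW_inv_mul (c : Fin n → G ⧸ S) (w : Wreath G (Fin n)) :
    (sW S n c)⁻¹ * w =
      (⟨fun i => ((c i).out)⁻¹ * w.left i, w.right⟩ : Wreath G (Fin n)) := rfl

lemma wreathMap_thetaW (w : Wreath G (Fin n)) :
    wreathMap S.subtype (Fin n) (thetaW S n w) = (sW S n (qW S n w))⁻¹ * w := by
  rw [sW_inv_mul]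
  rfl

end WreathData

lemma indRep_mk {k : Type*} [CommRing k] {H G : Type*} [Group H] [Group G] (f : H →* G)
    {W : Type*} [AddCommGroup W] [Module k W] (σ : Representation k H W) (g : G)
    (x : MonoidAlgebra k G ⊗[k] W) :
    indRep k f W σ g (Submodule.Quotient.mk x) = Submodule.Quotient.mk
      (LinearMap.rTensor W (LinearMap.mulLeft k (MonoidAlgebra.of k G g)) x) := rfl

lemma wreathRep_tprod {R : Type*} [CommRing R] {G : Type*} [Group G] {I : Type*}
    {V : Type*} [AddCommGroup V] [Module R V] (ρ : Representation R G V)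
    (w : Wreath G I) (v : I → V) :
    wreathRep R I ρ w (PiTensorProduct.tprod R v) =
      PiTensorProduct.tprod R fun i => ρ (w.left i) (v (w.right.symm i)) := by
  show (PiTensorProduct.map fun i => ρ (w.left i))
      ((PiTensorProduct.reindex R (fun _ : I => V) w.right) (PiTensorProduct.tprod R v)) = _
  rw [PiTensorProduct.reindex_tprod, PiTensorProduct.map_tprod]

section Main

variable (k : Type*) [CommRing k] (G : Type*) [Group G] (S : Subgroup G)
  (V : Type*) [AddCommGroup V] [Module k V] (ρ : Representation k S V) (n : ℕ)

/-- The canonical inclusion of `V` into the induced module. -/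
def iota : V →ₗ[k] Ind k S.subtype V ρ :=
  (indRel k S.subtype V ρ).mkQ ∘ₗ TensorProduct.mk k (MonoidAlgebra k G) V 1

lemma indRep_iota (g : G) (v : V) :
    indRep k S.subtype V ρ g (iota k G S V ρ v) =
      Submodule.Quotient.mk (MonoidAlgebra.of k G g ⊗ₜ[k] v) := by
  show indRep k S.subtype V ρ g (Submodule.Quotient.mk ((1 : MonoidAlgebra k G) ⊗ₜ[k] v)) = _
  rw [indRep_mk]
  rw [LinearMap.rTensor_tmul, LinearMap.mulLeft_apply, mul_one]

lemma iota_comm (h : S) (v : V) :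
    indRep k S.subtype V ρ (S.subtype h) (iota k G S V ρ v) = iota k G S V ρ (ρ h v) := by
  rw [indRep_iota]
  show _ = Submodule.Quotient.mk ((1 : MonoidAlgebra k G) ⊗ₜ[k] (ρ h v))
  rw [Submodule.Quotient.eq, indRel]
  have := Submodule.subset_span (R := k)
    (s := {x | ∃ (a : MonoidAlgebra k G) (h : S) (v : V),
      x = (a * MonoidAlgebra.of k G (S.subtype h)) ⊗ₜ[k] v - a ⊗ₜ[k] (ρ h v)})
    ⟨1, h, v, rfl⟩
  rw [one_mul] at this
  exact this

/-- The tensor power of the canonical inclusion. -/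
def map0 : (⨂[k] _i : Fin n, V) →ₗ[k] ⨂[k] _i : Fin n, Ind k S.subtype V ρ :=
  PiTensorProduct.map fun _ => iota k G S V ρ

lemma map0_tprod (v : Fin n → V) :
    map0 k G S V ρ n (PiTensorProduct.tprod k v) =
      PiTensorProduct.tprod k fun i => iota k G S V ρ (v i) :=
  PiTensorProduct.map_tprod _ _

lemma map0_comm (h : Wreath S (Fin n)) (x : ⨂[k] _i : Fin n, V) :
    wreathRep k (Fin n) (indRep k S.subtype V ρ) (wreathMap S.subtype (Fin n) h)
        (map0 k G S V ρ n x) =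
      map0 k G S V ρ n (wreathRep k (Fin n) ρ h x) := by
  induction x using PiTensorProduct.induction_on' with
  | tprodCoeff r v =>
    rw [PiTensorProduct.tprodCoeff_eq_smul_tprod, map_smul, map_smul, map_smul, map_smul]
    congr 1
    rw [map0_tprod, wreathRep_tprod, wreathRep_tprod, map0_tprod]
    congr 1
    funext i
    show indRep k S.subtype V ρ (S.subtype (h.left i))
      (iota k G S V ρ (v (h.right.symm i))) = _
    rw [iota_comm]
  | add y z hy hz =>
    rw [map_add, map_add, map_add, map_add, hy, hz]

/-- The comparison map on the Ind relation presentation. -/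
def PhiAux : MonoidAlgebra k (Wreath G (Fin n)) ⊗[k] (⨂[k] _i : Fin n, V) →ₗ[k]
    ⨂[k] _i : Fin n, Ind k S.subtype V ρ :=
  TensorProduct.lift
    (((Finsupp.lift ((⨂[k] _i : Fin n, V) →ₗ[k] ⨂[k] _i : Fin n, Ind k S.subtype V ρ) k
        (Wreath G (Fin n)))
      fun w => (wreathRep k (Fin n) (indRep k S.subtype V ρ) w : _ →ₗ[k] _) ∘ₗ map0 k G S V ρ n) ∘ₗ
      (MonoidAlgebra.coeffLinearEquiv k).toLinearMap)

lemma PhiAux_of (w : Wreath G (Fin n)) (x : ⨂[k] _i : Fin n, V) :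
    PhiAux k G S V ρ n (MonoidAlgebra.of k (Wreath G (Fin n)) w ⊗ₜ[k] x) =
      wreathRep k (Fin n) (indRep k S.subtype V ρ) w (map0 k G S V ρ n x) := by
  simp only [PhiAux, TensorProduct.lift.tmul, MonoidAlgebra.of_apply]
  erw [Finsupp.lift_apply, Finsupp.sum_single_index (by simp), one_smul]
  rfl

instance instACGInd : AddCommGroup (⨂[k] _i : Fin n, Ind k S.subtype V ρ) :=
  PiTensorProduct.instAddCommGroup (s := fun _ => Ind k S.subtype V ρ)

lemma indRelW_le_ker :
    indRel k (wreathMap S.subtype (Fin n)) (⨂[k] _i : Fin n, V) (wreathRep k (Fin n) ρ) ≤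
      LinearMap.ker (PhiAux k G S V ρ n) := by
  rw [indRel, Submodule.span_le]
  rintro x ⟨a, h, t, rfl⟩
  simp only [SetLike.mem_coe, LinearMap.mem_ker, map_sub, sub_eq_zero]
  induction a using MonoidAlgebra.induction_on with
  | of w =>
    rw [← _root_.map_mul, PhiAux_of, PhiAux_of, _root_.map_mul, Module.End.mul_apply,
      map0_comm]
  | add a b ha hb =>
    rw [add_mul, TensorProduct.add_tmul, TensorProduct.add_tmul, map_add, map_add, ha, hb]
  | smul r a ha =>
    rw [smul_mul_assoc, ← TensorProduct.smul_tmul', ← TensorProduct.smul_tmul', map_smul,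
      map_smul, ha]

/-- The comparison map on the induced representation. -/
def PhiQ : Ind k (wreathMap S.subtype (Fin n)) (⨂[k] _i : Fin n, V)
      (wreathRep k (Fin n) ρ) →ₗ[k] ⨂[k] _i : Fin n, Ind k S.subtype V ρ :=
  Submodule.liftQ _ (PhiAux k G S V ρ n) (indRelW_le_ker k G S V ρ n)

lemma PhiQ_mk (y : MonoidAlgebra k (Wreath G (Fin n)) ⊗[k] (⨂[k] _i : Fin n, V)) :
    PhiQ k G S V ρ n (Submodule.Quotient.mk y) = PhiAux k G S V ρ n y :=
  Submodule.liftQ_apply _ _ _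

lemma PhiQ_equivariant (w : Wreath G (Fin n))
    (x : Ind k (wreathMap S.subtype (Fin n)) (⨂[k] _i : Fin n, V) (wreathRep k (Fin n) ρ)) :
    PhiQ k G S V ρ n
      (indRep k (wreathMap S.subtype (Fin n)) (⨂[k] _i : Fin n, V)
        (wreathRep k (Fin n) ρ) w x) =
      wreathRep k (Fin n) (indRep k S.subtype V ρ) w (PhiQ k G S V ρ n x) := by
  induction x using Submodule.Quotient.induction_on with
  | _ y =>
    rw [indRep_mk]
    induction y using TensorProduct.induction_on with
    | zero => simp
    | add y z hy hz =>
      rw [map_add, Submodule.Quotient.mk_add, Submodule.Quotient.mk_add, map_add, map_add,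
        map_add, hy, hz]
    | tmul a t =>
      induction a using MonoidAlgebra.induction_on with
      | of w' =>
        rw [LinearMap.rTensor_tmul, LinearMap.mulLeft_apply, ← _root_.map_mul, PhiQ_mk,
          PhiQ_mk, PhiAux_of, PhiAux_of, _root_.map_mul, Module.End.mul_apply]
      | add a b ha hb =>
        rw [TensorProduct.add_tmul, map_add, Submodule.Quotient.mk_add,
          Submodule.Quotient.mk_add, map_add, map_add, map_add, ha, hb]
      | smul r a ha =>
        rw [← TensorProduct.smul_tmul', map_smul, Submodule.Quotient.mk_smul,
          Submodule.Quotient.mk_smul, map_smul, map_smul, map_smul, ha]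

/-- The direct-sum model of `Ind_S^G V`. -/
def modelG : Ind k S.subtype V ρ ≃ₗ[k] Π₀ _c : G ⧸ S, V :=
  indModel S.subtype ρ (fun g => QuotientGroup.mk g) Quotient.out (thetaS S)
    (fun g h => QuotientGroup.mk_mul_of_mem g h.2) (thetaS_mul S)
    (fun c => QuotientGroup.out_eq' c) (thetaS_out S) (subtype_thetaS S)

lemma modelG_mk_of (g : G) (v : V) :
    modelG k G S V ρ (Submodule.Quotient.mk (MonoidAlgebra.of k G g ⊗ₜ[k] v)) =
      DFinsupp.single (QuotientGroup.mk g) (ρ (thetaS S g) v) := by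
  unfold modelG
  exact indModel_mk_of _ _ _ _ _ _ _ _ _ _ g v

/-- The direct-sum model of the wreath induced representation. -/
def modelW : Ind k (wreathMap S.subtype (Fin n)) (⨂[k] _i : Fin n, V)
      (wreathRep k (Fin n) ρ) ≃ₗ[k] Π₀ _c : Fin n → G ⧸ S, ⨂[k] _i : Fin n, V :=
  indModel (wreathMap S.subtype (Fin n)) (wreathRep k (Fin n) ρ) (qW S n) (sW S n)
    (thetaW S n) (qW_mul S n) (thetaW_mul S n) (qW_sW S n) (thetaW_sW S n)
    (wreathMap_thetaW S n)

set_option synthInstance.maxHeartbeats 1000000 in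
lemma modelW_mk_of (w : Wreath G (Fin n)) (t : ⨂[k] _i : Fin n, V) :
    modelW k G S V ρ n
        (Submodule.Quotient.mk (MonoidAlgebra.of k (Wreath G (Fin n)) w ⊗ₜ[k] t)) =
      DFinsupp.single (qW S n w) (wreathRep k (Fin n) ρ (thetaW S n w) t) := by
  unfold modelW
  exact indModel_mk_of _ _ _ _ _ _ _ _ _ _ w t

/-- The direct-sum model of the tensor power of `Ind_S^G V`. -/
def modelT : (⨂[k] _i : Fin n, Ind k S.subtype V ρ) ≃ₗ[k]
    Π₀ _c : Fin n → G ⧸ S, ⨂[k] _i : Fin n, V :=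
  (PiTensorProduct.congr fun _ => modelG k G S V ρ).trans
    (piTensorDFinsupp k (C := G ⧸ S) (V := V) n)

lemma key (x : Ind k (wreathMap S.subtype (Fin n)) (⨂[k] _i : Fin n, V)
    (wreathRep k (Fin n) ρ)) :
    modelT k G S V ρ n (PhiQ k G S V ρ n x) = modelW k G S V ρ n x := by
  induction x using Submodule.Quotient.induction_on with
  | _ y =>
    induction y using TensorProduct.induction_on with
    | zero => simp
    | add y z hy hz =>
      rw [Submodule.Quotient.mk_add, map_add, map_add, map_add, hy, hz]
    | tmul a t =>
      induction a using MonoidAlgebra.induction_on with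
      | of w =>
        induction t using PiTensorProduct.induction_on' with
        | tprodCoeff r v =>
          rw [PiTensorProduct.tprodCoeff_eq_smul_tprod, TensorProduct.tmul_smul,
            Submodule.Quotient.mk_smul, map_smul, map_smul, map_smul]
          congr 1
          rw [PhiQ_mk, PhiAux_of, map0_tprod, wreathRep_tprod, modelW_mk_of,
            wreathRep_tprod]
          have h1 : (fun i => indRep k S.subtype V ρ (w.left i)
              (iota k G S V ρ (v (w.right.symm i)))) =
              fun i => Submodule.Quotient.mk
                (MonoidAlgebra.of k G (w.left i) ⊗ₜ[k] (v (w.right.symm i))) := by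
            funext i; rw [indRep_iota]
          rw [h1, modelT]
          rw [LinearEquiv.trans_apply, PiTensorProduct.congr_tprod]
          have h2 : (fun i => modelG k G S V ρ (Submodule.Quotient.mk
              (MonoidAlgebra.of k G (w.left i) ⊗ₜ[k] (v (w.right.symm i))))) =
              fun i => DFinsupp.single (QuotientGroup.mk (w.left i))
                (ρ (thetaS S (w.left i)) (v (w.right.symm i))) := by
            funext i; rw [modelG_mk_of]
          rw [h2, piTensorDFinsupp_tprod_single]
          rfl
        | add y z hy hz =>
          rw [TensorProduct.tmul_add, Submodule.Quotient.mk_add, map_add, map_add, map_add,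
            hy, hz]
      | add a b ha hb =>
        rw [TensorProduct.add_tmul, Submodule.Quotient.mk_add, map_add, map_add, map_add,
          ha, hb]
      | smul r a ha =>
        rw [← TensorProduct.smul_tmul', Submodule.Quotient.mk_smul, map_smul, map_smul,
          map_smul, ha]

end Main

end Aux7

end Aux7

theorem statement7 (k : Type*) [CommRing k] (G : Type*) [Group G] [Finite G]
    (S : Subgroup G) (V : Type*) [AddCommGroup V] [Module k V]
    (ρ : Representation k S V) (n : ℕ) :
    ∃ Φ : Ind k (wreathMap S.subtype (Fin n)) (⨂[k] _i : Fin n, V) (wreathRep k (Fin n) ρ)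
        ≃ₗ[k] ⨂[k] _i : Fin n, Ind k S.subtype V ρ,
      ∀ (w : Wreath G (Fin n))
        (x : Ind k (wreathMap S.subtype (Fin n)) (⨂[k] _i : Fin n, V) (wreathRep k (Fin n) ρ)),
        Φ (indRep k (wreathMap S.subtype (Fin n)) (⨂[k] _i : Fin n, V)
            (wreathRep k (Fin n) ρ) w x) =
          wreathRep k (Fin n) (indRep k S.subtype V ρ) w (Φ x) := by
  classical
  have hbij : Function.Bijective (Aux7.PhiQ k G S V ρ n) := by
    constructor
    · intro x y hxy
      apply (Aux7.modelW k G S V ρ n).injective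
      rw [← Aux7.key k G S V ρ n x, ← Aux7.key k G S V ρ n y, hxy]
    · intro y
      refine ⟨(Aux7.modelW k G S V ρ n).symm (Aux7.modelT k G S V ρ n y), ?_⟩
      apply (Aux7.modelT k G S V ρ n).injective
      rw [Aux7.key k G S V ρ n, LinearEquiv.apply_symm_apply]
  refine ⟨LinearEquiv.ofBijective (Aux7.PhiQ k G S V ρ n) hbij, fun w x => ?_⟩
  rw [LinearEquiv.ofBijective_apply, LinearEquiv.ofBijective_apply]
  exact Aux7.PhiQ_equivariant k G S V ρ n w x
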